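/- Let X be a real Banach space such that ‖Id − P‖ = 2 for every norm-one rank-one projection P on X. Then X has the local diameter two property: every slice S(x*, ε) = {x ∈ B_X : x*(x) > 1 − ε} with x* ∈ S_{X*}, ε > 0, has diameter 2. -/
import Mathlib

open Filter Topology

/-- Ekeland-type lemma on the closed unit ball. -/
lemma bp_ekeland {X : Type*} [NormedAddCommGroup X] [NormedSpace ℝ X] [CompleteSpace X]
    (g : X →L[ℝ] ℝ) {lam : ℝ} (hlam : 0 < lam) (x₀ : X) (h₀ : ‖x₀‖ ≤ 1) :
    ∃ xb : X, ‖xb‖ ≤ 1 ∧ g x₀ ≤ g xb ∧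
      ∀ y, ‖y‖ ≤ 1 → g y ≤ g xb + lam * ‖y - xb‖ := by
  classical
  set S : X → Set X := fun x => {y | ‖y‖ ≤ 1 ∧ g x + lam * ‖y - x‖ ≤ g y} with hS
  have Sself : ∀ x, ‖x‖ ≤ 1 → x ∈ S x := by
    intro x hx; refine ⟨hx, ?_⟩; simp
  have Strans : ∀ x y z, y ∈ S x → z ∈ S y → z ∈ S x := by
    rintro x y z ⟨hy1, hy2⟩ ⟨hz1, hz2⟩
    refine ⟨hz1, ?_⟩
    have htri : ‖z - x‖ ≤ ‖z - y‖ + ‖y - x‖ := by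
      have := dist_triangle z y x
      simpa [dist_eq_norm] using this
    nlinarith [htri]
  -- near-maximal choice
  have key : ∀ (n : ℕ) (x : X), ‖x‖ ≤ 1 →
      ∃ y, y ∈ S x ∧ ∀ y' ∈ S x, g y' ≤ g y + (2:ℝ)⁻¹ ^ n := by
    intro n x hx
    have hne : (g '' S x).Nonempty := ⟨g x, x, Sself x hx, rfl⟩
    have hbdd : BddAbove (g '' S x) := by
      refine ⟨‖g‖, ?_⟩
      rintro a ⟨y, hy, rfl⟩
      calc g y ≤ |g y| := le_abs_self _
        _ ≤ ‖g‖ * ‖y‖ := g.le_opNorm y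
        _ ≤ ‖g‖ * 1 := by
            have := norm_nonneg g
            nlinarith [hy.1]
        _ = ‖g‖ := mul_one _
    set M := sSup (g '' S x) with hM
    have hpos : (0:ℝ) < (2:ℝ)⁻¹ ^ n := by positivity
    obtain ⟨a, ⟨y, hy, rfl⟩, hag⟩ := exists_lt_of_lt_csSup hne (by linarith : M - (2:ℝ)⁻¹ ^ n < M)
    refine ⟨y, hy, fun y' hy' => ?_⟩
    have : g y' ≤ M := le_csSup hbdd ⟨y', hy', rfl⟩
    linarith
  have step : ∀ (n : ℕ) (x : {x : X // ‖x‖ ≤ 1}),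
      ∃ y : {x : X // ‖x‖ ≤ 1}, y.1 ∈ S x.1 ∧ ∀ y' ∈ S x.1, g y' ≤ g y.1 + (2:ℝ)⁻¹ ^ n := by
    intro n x
    obtain ⟨y, hy, hmax⟩ := key n x.1 x.2
    exact ⟨⟨y, hy.1⟩, hy, hmax⟩
  set u : ℕ → {x : X // ‖x‖ ≤ 1} :=
    fun n => Nat.rec ⟨x₀, h₀⟩ (fun n xn => Classical.choose (step n xn)) n with hu
  have h1 : ∀ n, (u (n+1)).1 ∈ S (u n).1 := fun n => (Classical.choose_spec (step n (u n))).1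
  have h2 : ∀ n, ∀ y' ∈ S (u n).1, g y' ≤ g (u (n+1)).1 + (2:ℝ)⁻¹ ^ n :=
    fun n => (Classical.choose_spec (step n (u n))).2
  have hchain : ∀ n m, n ≤ m → (u m).1 ∈ S (u n).1 := by
    intro n m hnm
    induction m with
    | zero => simpa [Nat.le_zero.mp hnm] using Sself (u 0).1 (u 0).2
    | succ k ih =>
      rcases Nat.lt_or_ge n (k+1) with hlt | hge
      · exact Strans _ _ _ (ih (Nat.lt_succ_iff.mp hlt)) (h1 k)
      · have : n = k + 1 := le_antisymm hnm hge
        subst this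
        exact Sself _ (u (k+1)).2
  have hsmall : ∀ n, ∀ y ∈ S (u (n+1)).1, lam * ‖y - (u (n+1)).1‖ ≤ (2:ℝ)⁻¹ ^ n := by
    intro n y hy
    have hyn : y ∈ S (u n).1 := Strans _ _ _ (h1 n) hy
    have h2' := h2 n y hyn
    have := hy.2
    linarith
  -- Cauchy
  have hconsec : ∀ n, dist ((u n).1) ((u (n+1)).1) ≤ ((2 * ‖g‖ + 2) / lam) * (2:ℝ)⁻¹ ^ n := by
    intro n
    rw [dist_eq_norm]
    match n with
    | 0 =>
      have h := (h1 0).2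
      norm_num at h ⊢
      have hb : ∀ z : X, ‖z‖ ≤ 1 → |g z| ≤ ‖g‖ := by
        intro z hz
        calc |g z| ≤ ‖g‖ * ‖z‖ := g.le_opNorm z
          _ ≤ ‖g‖ := by nlinarith [norm_nonneg g]
      have hb0 := hb _ (u 0).2
      have hb1 := hb _ (u 1).2
      have : lam * ‖(u 1).1 - (u 0).1‖ ≤ 2 * ‖g‖ := by
        have := abs_le.mp hb0
        have := abs_le.mp hb1
        linarith
      have hn : ‖(u 0).1 - (u 1).1‖ = ‖(u 1).1 - (u 0).1‖ := norm_sub_rev _ _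
      rw [hn, le_div_iff₀ hlam]
      nlinarith [norm_nonneg ((u 1).1 - (u 0).1)]
    | Nat.succ m =>
      show ‖(u (m+1)).1 - (u (m+2)).1‖ ≤ (2 * ‖g‖ + 2) / lam * (2:ℝ)⁻¹ ^ (m+1)
      have := hsmall m ((u (m+2)).1) (hchain (m+1) (m+2) (by omega))
      have hn : ‖(u (m+1)).1 - (u (m+2)).1‖ = ‖(u (m+2)).1 - (u (m+1)).1‖ := norm_sub_rev _ _
      rw [hn, div_mul_eq_mul_div, le_div_iff₀ hlam]
      have hpow : (2:ℝ)⁻¹ ^ m = 2 * (2:ℝ)⁻¹ ^ (m+1) := by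
        rw [pow_succ]; ring
      have hgn : (0:ℝ) ≤ ‖g‖ := norm_nonneg g
      have hp : (0:ℝ) < (2:ℝ)⁻¹ ^ (m+1) := by positivity
      nlinarith
  have hcauchy : CauchySeq (fun n => (u n).1) :=
    cauchySeq_of_le_geometric (2:ℝ)⁻¹ ((2 * ‖g‖ + 2) / lam) (by norm_num) hconsec
  obtain ⟨xb, hxb⟩ := cauchySeq_tendsto_of_complete hcauchy
  have hxb1 : ‖xb‖ ≤ 1 := by
    have : Tendsto (fun n => ‖(u n).1‖) atTop (𝓝 ‖xb‖) := (continuous_norm.tendsto xb).comp hxb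
    exact le_of_tendsto this (Filter.Eventually.of_forall fun n => (u n).2)
  have hmem : ∀ n, xb ∈ S (u n).1 := by
    intro n
    refine ⟨hxb1, ?_⟩
    have hle : ∀ m, n ≤ m → g (u n).1 + lam * ‖(u m).1 - (u n).1‖ ≤ g (u m).1 :=
      fun m hm => (hchain n m hm).2
    have t1 : Tendsto (fun m => g (u n).1 + lam * ‖(u m).1 - (u n).1‖) atTop
        (𝓝 (g (u n).1 + lam * ‖xb - (u n).1‖)) := by
      refine Tendsto.const_add _ (Tendsto.const_mul _ ?_)
      exact (continuous_norm.tendsto _).comp ((hxb.sub_const _))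
    have t2 : Tendsto (fun m => g ((u m).1)) atTop (𝓝 (g xb)) :=
      (g.continuous.tendsto xb).comp hxb
    exact le_of_tendsto_of_tendsto t1 t2 (eventually_atTop.mpr ⟨n, hle⟩)
  have hm0 := (hmem 0).2
  have hu0 : (u 0).1 = x₀ := rfl
  rw [hu0] at hm0
  refine ⟨xb, hxb1, by nlinarith [norm_nonneg (xb - x₀)], ?_⟩
  intro y hy
  by_contra hcon
  push_neg at hcon
  have hyS : y ∈ S xb := ⟨hy, le_of_lt hcon⟩
  have hyn : ∀ n, y ∈ S (u (n+1)).1 := fun n => Strans _ _ _ (hmem (n+1)) hyS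
  have hdiff : ∀ n : ℕ, lam * ‖y - xb‖ ≤ 2 * (2:ℝ)⁻¹ ^ n := by
    intro n
    have a1 := hsmall n y (hyn n)
    have a2 := hsmall n xb (hmem (n+1))
    have htri : ‖y - xb‖ ≤ ‖y - (u (n+1)).1‖ + ‖xb - (u (n+1)).1‖ := by
      have := dist_triangle y ((u (n+1)).1) xb
      simp only [dist_eq_norm] at this
      calc ‖y - xb‖ ≤ ‖y - (u (n+1)).1‖ + ‖(u (n+1)).1 - xb‖ := this
        _ = ‖y - (u (n+1)).1‖ + ‖xb - (u (n+1)).1‖ := by rw [norm_sub_rev ((u (n+1)).1)]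
    nlinarith
  have ht : Tendsto (fun n : ℕ => 2 * (2:ℝ)⁻¹ ^ n) atTop (𝓝 0) := by
    have : Tendsto (fun n : ℕ => (2:ℝ)⁻¹ ^ n) atTop (𝓝 0) :=
      tendsto_pow_atTop_nhds_zero_of_lt_one (by norm_num) (by norm_num)
    simpa using this.const_mul 2
  have hzero : lam * ‖y - xb‖ ≤ 0 := ge_of_tendsto' ht hdiff
  have hyx : y = xb := by
    have h1' := norm_nonneg (y - xb)
    have h2' : ‖y - xb‖ = 0 := by nlinarith
    exact sub_eq_zero.mp (norm_eq_zero.mp h2')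
  rw [hyx] at hcon
  simp at hcon

/-- Support functional via Hahn-Banach separation. -/
lemma bp_support {X : Type*} [NormedAddCommGroup X] [NormedSpace ℝ X]
    (g : X →L[ℝ] ℝ) (hg : ‖g‖ = 1) {lam : ℝ} (hlam : 0 < lam) (hlam1 : lam < 1)
    (xb : X) (hxb : ‖xb‖ ≤ 1) (hmax : ∀ y, ‖y‖ ≤ 1 → g y ≤ g xb + lam * ‖y - xb‖) :
    ∃ F : X →L[ℝ] ℝ, ‖F‖ = 1 ∧ F xb = 1 ∧ ∀ y, lam * ‖y‖ < g y → 0 ≤ F y := by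
  classical
  set s : Set X := {y | lam * ‖y - xb‖ + g xb < g y} with hs
  -- the cone fact
  have hcone : ∀ y : X, lam * ‖y‖ < g y → ∀ t : ℝ, 0 < t → xb + t • y ∈ s := by
    intro y hy t ht
    simp only [hs, Set.mem_setOf_eq, map_add, map_smul, add_sub_cancel_left, norm_smul,
      Real.norm_eq_abs, abs_of_pos ht, smul_eq_mul]
    nlinarith
  have hsconv : Convex ℝ s := by
    intro a ha b hb p q hp hq hpq
    rcases eq_or_lt_of_le hp with hp0 | hp0
    · have : q = 1 := by linarith
      simpa [← hp0, this] using hb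
    rcases eq_or_lt_of_le hq with hq0 | hq0
    · have : p = 1 := by linarith
      simpa [← hq0, this] using ha
    simp only [hs, Set.mem_setOf_eq] at ha hb ⊢
    have hsub : p • a + q • b - xb = p • (a - xb) + q • (b - xb) := by
      have h1 : p • xb + q • xb = xb := by rw [← add_smul, hpq, one_smul]
      rw [smul_sub, smul_sub]
      nth_rewrite 1 [← h1]
      abel
    have hnorm : ‖p • a + q • b - xb‖ ≤ p * ‖a - xb‖ + q * ‖b - xb‖ := by
      rw [hsub]
      calc ‖p • (a - xb) + q • (b - xb)‖ ≤ ‖p • (a - xb)‖ + ‖q • (b - xb)‖ := norm_add_le _ _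
        _ = p * ‖a - xb‖ + q * ‖b - xb‖ := by
            rw [norm_smul, norm_smul, Real.norm_eq_abs, Real.norm_eq_abs,
              abs_of_pos hp0, abs_of_pos hq0]
    have hmap : g (p • a + q • b) = p * g a + q * g b := by
      simp [map_add, map_smul]
    rw [hmap]
    have t1 := mul_le_mul_of_nonneg_left hnorm hlam.le
    have t2 := mul_lt_mul_of_pos_left ha hp0
    have t3 := mul_lt_mul_of_pos_left hb hq0
    have t4 : p * g xb + q * g xb = g xb := by rw [← add_mul, hpq, one_mul]
    nlinarith [t1, t2, t3, t4]
  have hsopen : IsOpen s := by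
    have : s = {y : X | (fun y => lam * ‖y - xb‖ + g xb) y < (fun y => g y) y} := rfl
    rw [this]
    exact isOpen_lt (by fun_prop) g.continuous
  have hdisj : Disjoint s (Metric.closedBall (0:X) 1) := by
    rw [Set.disjoint_left]
    intro y hy hy2
    rw [Metric.mem_closedBall, dist_zero_right] at hy2
    have := hmax y hy2
    simp only [hs, Set.mem_setOf_eq] at hy
    linarith
  -- nonempty direction w
  obtain ⟨x, hx1, hx2⟩ := g.exists_lt_apply_of_lt_opNorm (r := lam) (by rw [hg]; exact hlam1)
  rw [Real.norm_eq_abs] at hx2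
  set w : X := if 0 ≤ g x then x else -x with hw
  have hgw : lam * ‖w‖ < g w := by
    have hwn : ‖w‖ < 1 := by
      rcases le_or_gt 0 (g x) with h' | h' <;> simp [hw, h', not_le.mpr, norm_neg] <;>
        first | exact hx1 | simp [not_le.mpr h', norm_neg, hx1]
    have hgw' : g w = |g x| := by
      rcases le_or_gt 0 (g x) with h' | h'
      · simp [hw, h', abs_of_nonneg h']
      · simp [hw, not_le.mpr h', abs_of_neg h']
    rw [hgw']
    nlinarith [norm_nonneg w]
  have hwn1 : ‖w‖ ≤ 1 := by
    rcases le_or_gt 0 (g x) with h' | h' <;> simp [hw, h', not_le.mpr, norm_neg] <;>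
      first | exact hx1.le | simp [not_le.mpr h', norm_neg, hx1.le]
  obtain ⟨f, c0, hfs, hft⟩ := geometric_hahn_banach_open hsconv hsopen
    (convex_closedBall (0:X) 1) hdisj
  set G : X →L[ℝ] ℝ := -f with hG
  set c : ℝ := -c0 with hc
  have hGs : ∀ a ∈ s, c < G a := by
    intro a ha
    have := hfs a ha
    simp only [hG, hc, ContinuousLinearMap.neg_apply]
    linarith
  have hGt : ∀ b : X, ‖b‖ ≤ 1 → G b ≤ c := by
    intro b hb
    have := hft b (by rwa [Metric.mem_closedBall, dist_zero_right])
    simp only [hG, hc, ContinuousLinearMap.neg_apply]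
    linarith
  have key2 : ∀ y : X, lam * ‖y‖ < g y → ∀ t : ℝ, 0 < t → c < G xb + t * G y := by
    intro y hy t ht
    have := hGs _ (hcone y hy t ht)
    rwa [map_add, map_smul, smul_eq_mul] at this
  have hGxble : G xb ≤ c := hGt xb hxb
  have hGxbge : c ≤ G xb := by
    by_contra hlt
    push_neg at hlt
    set t : ℝ := (c - G xb) / (|G w| + 1) with htdef
    have habs : (0:ℝ) < |G w| + 1 := by positivity
    have ht : 0 < t := by
      apply div_pos (by linarith) habs
    have h1 := key2 w hgw t ht
    have h2 : t * G w ≤ t * |G w| := by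
      have := le_abs_self (G w)
      nlinarith
    have h3 : t * |G w| < c - G xb := by
      rw [htdef, div_mul_eq_mul_div, div_lt_iff₀ habs]
      nlinarith [abs_nonneg (G w)]
    linarith
  have hGxb : G xb = c := le_antisymm hGxble hGxbge
  have hGw : 0 < G w := by
    have := key2 w hgw 1 one_pos
    rw [hGxb] at this
    linarith
  have hcpos : 0 < c := lt_of_lt_of_le hGw (hGt w hwn1)
  have hGnorm : ‖G‖ = c := by
    apply le_antisymm
    · apply ContinuousLinearMap.opNorm_le_bound _ hcpos.le
      intro x'
      rcases eq_or_ne x' 0 with rfl | hx0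
      · simp
      · have hnx : 0 < ‖x'‖ := norm_pos_iff.mpr hx0
        have hu : ‖‖x'‖⁻¹ • x'‖ = 1 := by
          rw [norm_smul, Real.norm_eq_abs, abs_of_pos (inv_pos.mpr hnx),
            inv_mul_cancel₀ hnx.ne']
        have hA := hGt _ hu.le
        have hB := hGt (-(‖x'‖⁻¹ • x')) (by rw [norm_neg, hu])
        rw [map_neg] at hB
        have hx'v : ‖x'‖ • (‖x'‖⁻¹ • x') = x' := by
          rw [smul_smul, mul_inv_cancel₀ hnx.ne', one_smul]
        have hGx : G x' = ‖x'‖ * G (‖x'‖⁻¹ • x') := by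
          conv_lhs => rw [← hx'v]
          rw [map_smul, smul_eq_mul]
        have hGxv : ‖G x'‖ = ‖x'‖ * |G (‖x'‖⁻¹ • x')| := by
          rw [Real.norm_eq_abs, hGx, abs_mul, abs_of_pos hnx]
        rw [hGxv]
        have habs : |G (‖x'‖⁻¹ • x')| ≤ c := abs_le.mpr ⟨by linarith, hA⟩
        calc ‖x'‖ * |G (‖x'‖⁻¹ • x')| ≤ ‖x'‖ * c := mul_le_mul_of_nonneg_left habs hnx.le
          _ = c * ‖x'‖ := mul_comm _ _
    · rw [← hGxb]
      have h1 := G.le_opNorm xb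
      rw [Real.norm_eq_abs] at h1
      have h2 := le_abs_self (G xb)
      have h3 : ‖G‖ * ‖xb‖ ≤ ‖G‖ * 1 := mul_le_mul_of_nonneg_left hxb (norm_nonneg G)
      linarith
  refine ⟨c⁻¹ • G, ?_, ?_, ?_⟩
  · rw [norm_smul c⁻¹ G, Real.norm_eq_abs, abs_of_pos (inv_pos.mpr hcpos), hGnorm,
      inv_mul_cancel₀ hcpos.ne']
  · rw [ContinuousLinearMap.smul_apply, hGxb, smul_eq_mul, inv_mul_cancel₀ hcpos.ne']
  · intro y hy
    have := key2 y hy 1 one_pos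
    rw [hGxb] at this
    rw [ContinuousLinearMap.smul_apply, smul_eq_mul]
    have hGy : 0 < G y := by linarith
    positivity

set_option maxHeartbeats 1000000 in
/-- Phelps-type estimate: the support functional is close to `g`. -/
lemma bp_estimate {X : Type*} [NormedAddCommGroup X] [NormedSpace ℝ X]
    (g F : X →L[ℝ] ℝ) (hg : ‖g‖ = 1) {lam : ℝ} (hlam : 0 < lam) (hlam4 : lam ≤ 1/4)
    (xb : X) (hxb : ‖xb‖ ≤ 1) (hFxb : F xb = 1)
    (hage : 1 - lam^2 ≤ g xb) (hpos : ∀ y, lam * ‖y‖ < g y → 0 ≤ F y) :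
    ‖F - g‖ ≤ 13 * lam := by
  set a : ℝ := g xb with ha
  have ha1 : a ≤ 1 := by
    have h1 := g.le_opNorm xb
    rw [hg, one_mul, Real.norm_eq_abs] at h1
    have := le_abs_self (g xb)
    linarith
  have ha0 : (15:ℝ)/16 ≤ a := by nlinarith
  have halam : (1:ℝ)/2 ≤ a - lam := by nlinarith
  have hapos : 0 < a := by linarith
  -- subclaim on the kernel of g
  have hker : ∀ z : X, g z = 0 → (a - lam) * |F z| ≤ 2 * lam * ‖z‖ := by
    intro z hz
    rcases eq_or_ne z 0 with rfl | hz0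
    · simp
    have hnz : 0 < ‖z‖ := norm_pos_iff.mpr hz0
    set sv : ℝ := (a - lam) / (2 * lam * ‖z‖) with hsv
    have hsvpos : 0 < sv := div_pos (by linarith) (by positivity)
    have hsveq : sv * (2 * lam * ‖z‖) = a - lam := by
      rw [hsv, div_mul_cancel₀]
      positivity
    have hmem : ∀ σ : ℝ, |σ| = sv → 0 ≤ F (xb + σ • z) := by
      intro σ hσ
      apply hpos
      have hgv : g (xb + σ • z) = a := by
        rw [map_add, map_smul, smul_eq_mul, hz, mul_zero, add_zero]
      rw [hgv]
      have hn : ‖xb + σ • z‖ ≤ 1 + sv * ‖z‖ := by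
        calc ‖xb + σ • z‖ ≤ ‖xb‖ + ‖σ • z‖ := norm_add_le _ _
          _ = ‖xb‖ + |σ| * ‖z‖ := by rw [norm_smul, Real.norm_eq_abs]
          _ ≤ 1 + sv * ‖z‖ := by rw [hσ]; linarith
      have hsvz : sv * ‖z‖ * (2 * lam) = a - lam := by
        rw [← hsveq]; ring
      have : lam * (1 + sv * ‖z‖) < a := by nlinarith
      nlinarith [mul_le_mul_of_nonneg_left hn hlam.le]
    have h1 := hmem sv (abs_of_pos hsvpos)
    have h2 := hmem (-sv) (by rw [abs_neg, abs_of_pos hsvpos])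
    rw [map_add, map_smul, smul_eq_mul, hFxb] at h1 h2
    have habs : sv * |F z| ≤ 1 := by
      rcases abs_cases (F z) with ⟨he, _⟩ | ⟨he, _⟩ <;> rw [he] <;> nlinarith
    calc (a - lam) * |F z| = sv * (2 * lam * ‖z‖) * |F z| := by rw [hsveq]
      _ = (sv * |F z|) * (2 * lam * ‖z‖) := by ring
      _ ≤ 1 * (2 * lam * ‖z‖) := by
          apply mul_le_mul_of_nonneg_right habs (by positivity)
      _ = 2 * lam * ‖z‖ := one_mul _
  -- main estimate
  apply ContinuousLinearMap.opNorm_le_bound _ (by positivity)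
  intro y
  set t : ℝ := g y with hts
  have ht : |t| ≤ ‖y‖ := by
    have := g.le_opNorm y
    rwa [hg, one_mul, Real.norm_eq_abs] at this
  set τ : ℝ := t / a with hτ
  have hτa : τ * a = t := div_mul_cancel₀ _ hapos.ne'
  have hτabs : |τ| ≤ 2 * |t| := by
    rw [hτ, abs_div, abs_of_pos hapos, div_le_iff₀ hapos]
    nlinarith [abs_nonneg t]
  set z : X := y - τ • xb with hzdef
  have hgz : g z = 0 := by
    rw [hzdef, map_sub, map_smul, smul_eq_mul, ← ha, ← hts, hτa, sub_self]
  have hFz : F z = F y - τ := by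
    rw [hzdef, map_sub, map_smul, smul_eq_mul, hFxb, mul_one]
  have hnz : ‖z‖ ≤ 3 * ‖y‖ := by
    calc ‖z‖ ≤ ‖y‖ + ‖τ • xb‖ := norm_sub_le _ _
      _ = ‖y‖ + |τ| * ‖xb‖ := by rw [norm_smul, Real.norm_eq_abs]
      _ ≤ ‖y‖ + |τ| := by nlinarith [abs_nonneg τ]
      _ ≤ 3 * ‖y‖ := by nlinarith
  have hFzb : |F z| ≤ 12 * lam * ‖y‖ := by
    have h1 := hker z hgz
    nlinarith [abs_nonneg (F z), norm_nonneg y]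
  have hτt : |τ - t| ≤ lam * ‖y‖ / 2 := by
    have he : τ - t = τ * (1 - a) := by rw [mul_sub, mul_one, hτa]
    rw [he, abs_mul, abs_of_nonneg (by linarith : (0:ℝ) ≤ 1 - a)]
    have h1 : |τ| ≤ 2 * ‖y‖ := le_trans hτabs (by linarith)
    have h2 : 1 - a ≤ lam / 4 := by nlinarith
    calc |τ| * (1 - a) ≤ (2 * ‖y‖) * (lam / 4) :=
          mul_le_mul h1 h2 (by linarith) (by positivity)
      _ = lam * ‖y‖ / 2 := by ring
  have hfy : (F - g) y = F z + (τ - t) := by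
    rw [ContinuousLinearMap.sub_apply, hFz, ← hts]
    ring
  rw [hfy, Real.norm_eq_abs]
  calc |F z + (τ - t)| ≤ |F z| + |τ - t| := abs_add_le _ _
    _ ≤ 12 * lam * ‖y‖ + lam * ‖y‖ / 2 := by linarith
    _ ≤ 13 * lam * ‖y‖ := by nlinarith [norm_nonneg y]

set_option maxHeartbeats 1000000 in
/-- If `‖Id - P‖ = 2` for every norm-one rank-one projection `P` on a real
Banach space `X`, then `X` has the local diameter two property: every slice of
the unit ball has diameter `2`. -/
theorem stmt_5 {X : Type*} [NormedAddCommGroup X] [NormedSpace ℝ X] [CompleteSpace X]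
    (h : ∀ (f : X →L[ℝ] ℝ) (x : X), f x = 1 → ‖f.smulRight x‖ = 1 →
      ‖ContinuousLinearMap.id ℝ X - f.smulRight x‖ = 2) :
    ∀ g : X →L[ℝ] ℝ, ‖g‖ = 1 → ∀ ε > (0 : ℝ),
      Metric.diam {y : X | ‖y‖ ≤ 1 ∧ 1 - ε < g y} = 2 := by
  intro g hg ε hε
  set S : Set X := {y : X | ‖y‖ ≤ 1 ∧ 1 - ε < g y} with hSdef
  have hbd : Bornology.IsBounded S := by
    apply (Metric.isBounded_closedBall (x := (0:X)) (r := 1)).subset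
    intro y hy
    rw [Metric.mem_closedBall, dist_zero_right]
    exact hy.1
  have hub : Metric.diam S ≤ 2 := by
    apply Metric.diam_le_of_forall_dist_le (by norm_num)
    intro u hu v hv
    rw [dist_eq_norm]
    calc ‖u - v‖ ≤ ‖u‖ + ‖v‖ := norm_sub_le _ _
      _ ≤ 2 := by linarith [hu.1, hv.1]
  have hlb : ∀ δ : ℝ, 0 < δ → δ ≤ ε/2 → 2 - 2*δ ≤ Metric.diam S := by
    intro δ hδ hδε
    set lam : ℝ := min ε 1 / 100 with hldef
    have hεmin : 0 < min ε 1 := lt_min hε one_pos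
    have hlam0 : 0 < lam := by positivity
    have hlam14 : lam ≤ 1/4 := by
      have : min ε 1 ≤ 1 := min_le_right _ _
      rw [hldef]; linarith
    have hlam1 : lam < 1 := by linarith
    have hlamε : lam ≤ ε/100 := by
      have : min ε 1 ≤ ε := min_le_left _ _
      rw [hldef]; linarith
    -- starting point
    have hlt : 1 - lam^2 < ‖g‖ := by rw [hg]; nlinarith
    obtain ⟨x, hx1, hx2⟩ := g.exists_lt_apply_of_lt_opNorm hlt
    rw [Real.norm_eq_abs] at hx2
    set x₀ : X := if 0 ≤ g x then x else -x with hx₀def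
    have hx₀n : ‖x₀‖ ≤ 1 := by
      rcases le_or_gt 0 (g x) with h' | h'
      · rw [hx₀def, if_pos h']; exact hx1.le
      · rw [hx₀def, if_neg (not_le.mpr h'), norm_neg]; exact hx1.le
    have hgx₀ : 1 - lam^2 < g x₀ := by
      have : g x₀ = |g x| := by
        rcases le_or_gt 0 (g x) with h' | h'
        · simp [hx₀def, h', abs_of_nonneg h']
        · simp [hx₀def, not_le.mpr h', abs_of_neg h']
      rw [this]; exact hx2
    obtain ⟨xb, hxb1, hxb2, hxb3⟩ := bp_ekeland g hlam0 x₀ hx₀n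
    have hgxb : 1 - lam^2 < g xb := lt_of_lt_of_le hgx₀ hxb2
    obtain ⟨F, hF1, hFxb, hFpos⟩ := bp_support g hg hlam0 hlam1 xb hxb1 hxb3
    have hest : ‖F - g‖ ≤ 13 * lam :=
      bp_estimate g F hg hlam0 hlam14 xb hxb1 hFxb hgxb.le hFpos
    have h13 : 13 * lam ≤ ε/2 := by linarith
    have hxbnorm : ‖xb‖ = 1 := by
      apply le_antisymm hxb1
      have h1 := F.le_opNorm xb
      rw [hF1, one_mul, Real.norm_eq_abs, hFxb, abs_one] at h1
      exact h1
    have hP := h F xb hFxb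
      (by rw [ContinuousLinearMap.norm_smulRight_apply, hF1, hxbnorm, one_mul])
    have h2δ : (2:ℝ) - δ < ‖ContinuousLinearMap.id ℝ X - F.smulRight xb‖ := by
      rw [hP]; linarith
    obtain ⟨z, hz1, hz2⟩ :=
      (ContinuousLinearMap.id ℝ X - F.smulRight xb).exists_lt_apply_of_lt_opNorm h2δ
    have happ : (ContinuousLinearMap.id ℝ X - F.smulRight xb) z = z - F z • xb := by
      simp [ContinuousLinearMap.sub_apply, ContinuousLinearMap.smulRight_apply]
    rw [happ] at hz2
    set t : ℝ := F z with htdef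
    have htle : |t| ≤ 1 := by
      have h1 := F.le_opNorm z
      rw [hF1, one_mul, Real.norm_eq_abs] at h1
      linarith [hz1.le]
    have htsn : ‖t • xb‖ = |t| := by
      rw [norm_smul, Real.norm_eq_abs, hxbnorm, mul_one]
    have htge : 1 - δ < |t| := by
      have h1 : ‖z - t • xb‖ ≤ ‖z‖ + |t| := by
        calc ‖z - t • xb‖ ≤ ‖z‖ + ‖t • xb‖ := norm_sub_le _ _
          _ = ‖z‖ + |t| := by rw [htsn]
      linarith [hz1]
    have hFg : ∀ v : X, ‖v‖ ≤ 1 → |F v - g v| ≤ 13 * lam := by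
      intro v hv
      have h1 := (F - g).le_opNorm v
      rw [ContinuousLinearMap.sub_apply, Real.norm_eq_abs] at h1
      have h2 : ‖F - g‖ * ‖v‖ ≤ 13 * lam := by
        calc ‖F - g‖ * ‖v‖ ≤ ‖F - g‖ * 1 := by
              apply mul_le_mul_of_nonneg_left hv (norm_nonneg _)
          _ = ‖F - g‖ := mul_one _
          _ ≤ 13 * lam := hest
      linarith
    have hxbS : xb ∈ S := by
      refine ⟨hxb1, ?_⟩
      nlinarith
    rcases le_or_gt 0 t with hts | hts
    · have htpos : 1 - δ < t := by rwa [abs_of_nonneg hts] at htge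
      have hzS : z ∈ S := by
        refine ⟨hz1.le, ?_⟩
        have := hFg z hz1.le
        rw [← htdef] at this
        have h2 := abs_le.mp this
        linarith [h2.1, h2.2]
      have he : z - t • xb = (z - xb) - (t - 1) • xb := by
        rw [sub_smul, one_smul]; abel
      have hd1 : ‖z - t • xb‖ ≤ ‖z - xb‖ + (1 - t) := by
        calc ‖z - t • xb‖ = ‖(z - xb) - (t - 1) • xb‖ := by rw [he]
          _ ≤ ‖z - xb‖ + ‖(t - 1) • xb‖ := norm_sub_le _ _
          _ = ‖z - xb‖ + |t - 1| := by rw [norm_smul, Real.norm_eq_abs, hxbnorm, mul_one]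
          _ = ‖z - xb‖ + (1 - t) := by
              rw [abs_of_nonpos (by linarith [le_abs_self t] : t - 1 ≤ 0)]
              ring_nf
      have hdist : 2 - 2*δ ≤ dist z xb := by
        rw [dist_eq_norm]
        linarith
      calc 2 - 2*δ ≤ dist z xb := hdist
        _ ≤ Metric.diam S := Metric.dist_le_diam_of_mem hbd hzS hxbS
    · have htneg : 1 - δ < -t := by rwa [abs_of_neg hts] at htge
      have hzS : -z ∈ S := by
        refine ⟨by rw [norm_neg]; exact hz1.le, ?_⟩
        have := hFg z hz1.le
        rw [← htdef] at this
        have h2 := abs_le.mp this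
        rw [map_neg]
        linarith [h2.1, h2.2]
      have he : z - t • xb = (z + xb) - (t + 1) • xb := by
        rw [add_smul, one_smul]; abel
      have ht1 : -1 ≤ t := by linarith [abs_le.mp htle]
      have hd1 : ‖z - t • xb‖ ≤ ‖z + xb‖ + (1 + t) := by
        calc ‖z - t • xb‖ = ‖(z + xb) - (t + 1) • xb‖ := by rw [he]
          _ ≤ ‖z + xb‖ + ‖(t + 1) • xb‖ := norm_sub_le _ _
          _ = ‖z + xb‖ + |t + 1| := by rw [norm_smul, Real.norm_eq_abs, hxbnorm, mul_one]
          _ = ‖z + xb‖ + (1 + t) := by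
              rw [abs_of_nonneg (by linarith : (0:ℝ) ≤ t + 1)]
              ring_nf
      have hdist : 2 - 2*δ ≤ dist (-z) xb := by
        rw [dist_eq_norm]
        have : -z - xb = -(z + xb) := by abel
        rw [this, norm_neg]
        linarith
      calc 2 - 2*δ ≤ dist (-z) xb := hdist
        _ ≤ Metric.diam S := Metric.dist_le_diam_of_mem hbd hzS hxbS
  have hlb2 : 2 ≤ Metric.diam S := by
    apply le_of_forall_pos_le_add
    intro η hη
    have hmin : 0 < min (η/2) (ε/2) := lt_min (by linarith) (by linarith)
    have := hlb (min (η/2) (ε/2)) hmin (min_le_right _ _)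
    have h2 : min (η/2) (ε/2) ≤ η/2 := min_le_left _ _
    linarith
  linarith
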